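/- Any restricted partition of order z of a rooted binary tree on n vertices has O(n/z) sets; in particular, for z = 2 there exists a restricted partition with at most 5n/6 sets. -/

import Mathlib

open SimpleGraph
open scoped Classical

/-- `T` is a binary tree rooted at `r`: it is a tree in which every vertex has at
most two children (where `v` is a child of `u` if they are adjacent and `v` is one
step further from the root). -/
def IsBinaryRootedTree {V : Type*} [Fintype V] (T : SimpleGraph V) (r : V) : Prop :=
  T.IsTree ∧ ∀ u : V,
    (Finset.univ.filter fun v => T.Adj u v ∧ T.dist r v = T.dist r u + 1).card ≤ 2

/-- A candidate set of a restricted partition of order `z`: it has at most `z`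
vertices, induces a connected subtree of `T`, and if it has more than one vertex
then at most two tree edges have exactly one endpoint in it. -/
def GoodSet {V : Type*} [Fintype V] [DecidableEq V] (T : SimpleGraph V) (z : ℕ)
    (S : Finset V) : Prop :=
  S.card ≤ z ∧ (T.induce (S : Set V)).Connected ∧
    (1 < S.card →
      (T.edgeFinset.filter fun e => ∃ u v : V, e = s(u, v) ∧ u ∈ S ∧ v ∉ S).card ≤ 2)

/-- A restricted partition of order `z` of the vertices of `T`: a partition into
good sets that is maximal, i.e. no two of its sets can be merged into a single
good set. -/
def IsRestrictedPartition {V : Type*} [Fintype V] [DecidableEq V]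
    (T : SimpleGraph V) (z : ℕ) (P : Finset (Finset V)) : Prop :=
  (∀ v : V, ∃! S : Finset V, S ∈ P ∧ v ∈ S) ∧
  (∀ S ∈ P, S.Nonempty) ∧
  (∀ S ∈ P, GoodSet T z S) ∧
  (∀ S₁ ∈ P, ∀ S₂ ∈ P, S₁ ≠ S₂ → ¬ GoodSet T z (S₁ ∪ S₂))

set_option linter.unusedSectionVars false
set_option linter.unusedVariables false
set_option maxHeartbeats 2000000

namespace RPB
variable {V : Type} [Fintype V] [DecidableEq V]

noncomputable def bdry (T : SimpleGraph V) (S : Finset V) : Finset (Sym2 V) :=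
  T.edgeFinset.filter fun e => ∃ u v : V, e = s(u, v) ∧ u ∈ S ∧ v ∉ S

noncomputable def inn (T : SimpleGraph V) (S : Finset V) : Finset (Sym2 V) :=
  T.edgeFinset.filter fun e => ∃ u v : V, e = s(u, v) ∧ u ∈ S ∧ v ∈ S


lemma isPath_concat {T : SimpleGraph V} {a b c : V} {p : T.Walk a b} (hp : p.IsPath)
    (h : T.Adj b c) (hc : c ∉ p.support) : (p.concat h).IsPath := by
  rw [← Walk.isPath_reverse_iff, Walk.reverse_concat]
  refine Walk.IsPath.cons ?_ ?_
  · rwa [Walk.isPath_reverse_iff]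
  · rwa [Walk.support_reverse, List.mem_reverse]

lemma adj_dist_ne {T : SimpleGraph V} (hT : T.IsTree) (r : V) {u v : V}
    (huv : T.Adj u v) : T.dist r u ≠ T.dist r v := by
  intro hd
  obtain ⟨p, hp, hl⟩ := hT.isConnected.exists_path_of_dist r v
  have hu : u ∉ p.support := by
    intro hu
    have h1 : T.dist r u ≤ (p.takeUntil u hu).length := T.dist_le _
    have h2 : T.dist u v ≤ (p.dropUntil u hu).length := T.dist_le _
    have h3 : (p.takeUntil u hu).length + (p.dropUntil u hu).length = p.length := by
      rw [← Walk.length_append, p.take_spec hu]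
    have hduv : T.dist u v = 1 := dist_eq_one_iff_adj.mpr huv
    omega
  obtain ⟨p', hp', hl'⟩ := hT.isConnected.exists_path_of_dist r u
  have hne : (p.concat huv.symm) ≠ p' := by
    intro he
    have : (p.concat huv.symm).length = p'.length := by rw [he]
    rw [Walk.length_concat] at this
    omega
  obtain ⟨q, -, hq⟩ := hT.existsUnique_path r u
  exact hne ((hq _ (isPath_concat hp huv.symm hu)).trans (hq _ hp').symm)

lemma parent_unique {T : SimpleGraph V} (hT : T.IsTree) (r : V) {u p₁ p₂ : V}
    (h₁ : T.Adj u p₁) (h₂ : T.Adj u p₂)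
    (d₁ : T.dist r p₁ + 1 = T.dist r u) (d₂ : T.dist r p₂ + 1 = T.dist r u) : p₁ = p₂ := by
  obtain ⟨q₁, hq₁, hl₁⟩ := hT.isConnected.exists_path_of_dist r p₁
  obtain ⟨q₂, hq₂, hl₂⟩ := hT.isConnected.exists_path_of_dist r p₂
  have hu₁ : u ∉ q₁.support := by
    intro hu
    have h1 : T.dist r u ≤ (q₁.takeUntil u hu).length := T.dist_le _
    have := q₁.length_takeUntil_le hu
    omega
  have hu₂ : u ∉ q₂.support := by
    intro hu
    have h1 : T.dist r u ≤ (q₂.takeUntil u hu).length := T.dist_le _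
    have := q₂.length_takeUntil_le hu
    omega
  obtain ⟨q, -, hq⟩ := hT.existsUnique_path r u
  have he : q₁.concat h₁.symm = q₂.concat h₂.symm :=
    (hq _ (isPath_concat hq₁ h₁.symm hu₁)).trans (hq _ (isPath_concat hq₂ h₂.symm hu₂)).symm
  obtain ⟨hv, -⟩ := Walk.concat_inj he
  exact hv

lemma adj_dist_cases {T : SimpleGraph V} (hT : T.IsTree) (r : V) {u v : V} (h : T.Adj u v) :
    T.dist r v = T.dist r u + 1 ∨ T.dist r u = T.dist r v + 1 := by
  have h1 : T.dist r v ≤ T.dist r u + 1 := by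
    have := hT.isConnected.dist_triangle (u := r) (v := u) (w := v)
    rwa [dist_eq_one_iff_adj.mpr h] at this
  have h2 : T.dist r u ≤ T.dist r v + 1 := by
    have := hT.isConnected.dist_triangle (u := r) (v := v) (w := u)
    rwa [dist_eq_one_iff_adj.mpr h.symm] at this
  have := adj_dist_ne hT r h
  omega


lemma exists_parent {W : Type} {G : SimpleGraph W} (hc : G.Connected) {r u : W}
    (h : u ≠ r) : ∃ p, G.Adj u p ∧ G.dist r p + 1 = G.dist r u := by
  obtain ⟨pw, hp, hl⟩ := hc.exists_path_of_dist r u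
  have hd : G.dist r u ≠ 0 := by
    rw [SimpleGraph.dist_ne_zero_iff_ne_and_reachable]
    exact ⟨fun hh => h hh.symm, hc.preconnected r u⟩
  cases hrev : pw.reverse with
  | nil =>
      exfalso
      have : pw.length = 0 := by
        have := congrArg Walk.length hrev
        simpa using this
      omega
  | cons hadj q =>
      rename_i y
      refine ⟨y, hadj, ?_⟩
      have hql : q.length + 1 = pw.length := by
        have := congrArg Walk.length hrev
        simp [Walk.length_cons] at this
        omega
      have h1 : G.dist r y ≤ q.length := by
        have := G.dist_le q.reverse
        simpa using this
      have h2 : G.dist r u ≤ G.dist r y + 1 := by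
        have ht := hc.dist_triangle (u := r) (v := y) (w := u)
        rwa [dist_eq_one_iff_adj.mpr hadj.symm] at ht
      omega


lemma neighborFinset_subset {T : SimpleGraph V} (hT : T.IsTree) (r u : V) :
    T.neighborFinset u ⊆
      (Finset.univ.filter fun v => T.Adj u v ∧ T.dist r v = T.dist r u + 1) ∪
      (Finset.univ.filter fun v => T.Adj u v ∧ T.dist r u = T.dist r v + 1) := by
  intro v hv
  rw [mem_neighborFinset] at hv
  rcases adj_dist_cases hT r hv with h | h <;>
    simp [Finset.mem_union, Finset.mem_filter, hv, h]

lemma parents_card_le_one {T : SimpleGraph V} (hT : T.IsTree) (r u : V) :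
    (Finset.univ.filter fun v => T.Adj u v ∧ T.dist r u = T.dist r v + 1).card ≤ 1 := by
  apply Finset.card_le_one.mpr
  intro a ha b hb
  simp only [Finset.mem_filter] at ha hb
  exact parent_unique hT r ha.2.1 hb.2.1 ha.2.2.symm hb.2.2.symm

lemma degree_le_three {T : SimpleGraph V} (hT : T.IsTree) (r : V)
    (hb : ∀ u : V,
      (Finset.univ.filter fun v => T.Adj u v ∧ T.dist r v = T.dist r u + 1).card ≤ 2)
    (u : V) : T.degree u ≤ 3 := by
  have h1 := Finset.card_le_card (neighborFinset_subset hT r u)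
  have h2 := Finset.card_union_le
      (Finset.univ.filter fun v => T.Adj u v ∧ T.dist r v = T.dist r u + 1)
      (Finset.univ.filter fun v => T.Adj u v ∧ T.dist r u = T.dist r v + 1)
  have h3 := parents_card_le_one hT r u
  have h4 := hb u
  rw [← card_neighborFinset_eq_degree]
  omega


lemma mem_bdry {T : SimpleGraph V} {S : Finset V} {e : Sym2 V} :
    e ∈ bdry T S ↔ ∃ a b, e = s(a, b) ∧ T.Adj a b ∧ a ∈ S ∧ b ∉ S := by
  constructor
  · intro he
    simp only [bdry, Finset.mem_filter, mem_edgeFinset] at he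
    obtain ⟨hedge, u, v, rfl, hu, hv⟩ := he
    exact ⟨u, v, rfl, (mem_edgeSet T).mp hedge, hu, hv⟩
  · rintro ⟨a, b, rfl, hab, ha, hb⟩
    simp only [bdry, Finset.mem_filter, mem_edgeFinset]
    exact ⟨(mem_edgeSet T).mpr hab, a, b, rfl, ha, hb⟩

lemma bdry_singleton (T : SimpleGraph V) (x : V) :
    bdry T {x} = T.incidenceFinset x := by
  ext e
  rw [mem_bdry, mem_incidenceFinset]
  constructor
  · rintro ⟨a, b, rfl, hab, ha, hb⟩
    simp only [Finset.mem_singleton] at ha hb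
    subst ha
    exact ⟨(mem_edgeSet T).mpr hab, Sym2.mem_mk_left _ _⟩
  · rintro ⟨he, hx⟩
    induction e using Sym2.ind with
    | _ a b =>
      have hab : T.Adj a b := (mem_edgeSet T).mp he
      rcases Sym2.mem_iff.mp hx with h | h
      · refine ⟨a, b, rfl, hab, by simp [h.symm], ?_⟩
        simp only [Finset.mem_singleton]
        exact fun hh => hab.ne (hh.trans h).symm
      · refine ⟨b, a, Sym2.eq_swap, hab.symm, by simp [h.symm], ?_⟩
        simp only [Finset.mem_singleton]
        exact fun hh => hab.ne ((h ▸ hh : a = b))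

lemma bdry_singleton_card (T : SimpleGraph V) (x : V) :
    (bdry T {x}).card = T.degree x := by
  rw [bdry_singleton, card_incidenceFinset_eq_degree]

lemma bdry_pair (T : SimpleGraph V) {u v : V} (huv : T.Adj u v) :
    bdry T {u, v} = (T.incidenceFinset u ∪ T.incidenceFinset v).erase s(u, v) := by
  ext e
  rw [mem_bdry, Finset.mem_erase, Finset.mem_union, mem_incidenceFinset, mem_incidenceFinset]
  constructor
  · rintro ⟨a, b, rfl, hab, ha, hb⟩
    simp only [Finset.mem_insert, Finset.mem_singleton] at ha hb
    push_neg at hb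
    constructor
    · intro he
      rcases Sym2.eq_iff.mp he with ⟨rfl, rfl⟩ | ⟨rfl, rfl⟩
      · exact hb.2 rfl
      · exact hb.1 rfl
    · rcases ha with rfl | rfl
      · exact Or.inl ⟨(mem_edgeSet T).mpr hab, Sym2.mem_mk_left _ _⟩
      · exact Or.inr ⟨(mem_edgeSet T).mpr hab, Sym2.mem_mk_left _ _⟩
  · rintro ⟨hne, h⟩
    induction e using Sym2.ind with
    | _ a b =>
      have hab : T.Adj a b := by
        rcases h with ⟨he, -⟩ | ⟨he, -⟩ <;> exact (mem_edgeSet T).mp he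
      have hmem : u ∈ s(a, b) ∨ v ∈ s(a, b) := by
        rcases h with ⟨-, hx⟩ | ⟨-, hx⟩
        · exact Or.inl hx
        · exact Or.inr hx
      have hba : s(b, a) = s(a, b) := Sym2.eq_swap
      rcases hmem with hx | hx
      · rcases Sym2.mem_iff.mp hx with h1 | h1
        · -- u = a
          refine ⟨a, b, rfl, hab, by simp [h1.symm], ?_⟩
          simp only [Finset.mem_insert, Finset.mem_singleton]
          push_neg
          refine ⟨fun hh => hab.ne (hh.trans h1).symm, fun hh => hne ?_⟩
          rw [← h1, hh]
        · -- u = b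
          refine ⟨b, a, hba.symm, hab.symm, by simp [h1.symm], ?_⟩
          simp only [Finset.mem_insert, Finset.mem_singleton]
          push_neg
          refine ⟨fun hh => hab.ne (h1 ▸ hh : a = b), fun hh => hne ?_⟩
          rw [← h1, hh, Sym2.eq_swap]
      · rcases Sym2.mem_iff.mp hx with h1 | h1
        · -- v = a
          refine ⟨a, b, rfl, hab, by simp [h1.symm], ?_⟩
          simp only [Finset.mem_insert, Finset.mem_singleton]
          push_neg
          refine ⟨fun hh => hne ?_, fun hh => hab.ne (hh.trans h1).symm⟩
          rw [← h1, hh, Sym2.eq_swap]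
        · -- v = b
          refine ⟨b, a, hba.symm, hab.symm, by simp [h1.symm], ?_⟩
          simp only [Finset.mem_insert, Finset.mem_singleton]
          push_neg
          refine ⟨fun hh => hne ?_, fun hh => hab.ne (h1 ▸ hh : a = b)⟩
          rw [← h1, hh]

lemma bdry_pair_card (T : SimpleGraph V) {u v : V} (huv : T.Adj u v) :
    (bdry T {u, v}).card + 2 = T.degree u + T.degree v := by
  rw [bdry_pair T huv]
  have hmem : s(u, v) ∈ T.incidenceFinset u ∪ T.incidenceFinset v := by
    rw [Finset.mem_union, mem_incidenceFinset]
    exact Or.inl ⟨(mem_edgeSet T).mpr huv, Sym2.mem_mk_left _ _⟩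
  have h1 := Finset.card_erase_add_one hmem
  have h2 := Finset.card_union_add_card_inter (T.incidenceFinset u) (T.incidenceFinset v)
  have h3 : T.incidenceFinset u ∩ T.incidenceFinset v = {s(u, v)} := by
    ext e
    rw [Finset.mem_inter, mem_incidenceFinset, mem_incidenceFinset, Finset.mem_singleton]
    constructor
    · rintro ⟨⟨he, hu⟩, ⟨-, hv⟩⟩
      exact ((Sym2.mem_and_mem_iff huv.ne).mp ⟨hu, hv⟩)
    · rintro rfl
      exact ⟨⟨(mem_edgeSet T).mpr huv, Sym2.mem_mk_left _ _⟩,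
        ⟨(mem_edgeSet T).mpr huv, Sym2.mem_mk_right _ _⟩⟩
  rw [h3] at h2
  simp only [Finset.card_singleton] at h2
  rw [card_incidenceFinset_eq_degree, card_incidenceFinset_eq_degree] at h2
  omega


lemma walk_boundary {T : SimpleGraph V} {S : Finset V} :
    ∀ {a c : V}, T.Walk a c → a ∈ S → c ∉ S → (bdry T S).Nonempty := by
  intro a c w
  induction w with
  | nil => intro ha hc; exact absurd ha hc
  | cons h q ih =>
    intro ha hc
    rename_i x y _
    by_cases hy : y ∈ S
    · exact ih hy hc
    · exact ⟨s(x, y), mem_bdry.mpr ⟨x, y, rfl, h, ha, hy⟩⟩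

lemma induce_reachable {T : SimpleGraph V} {s : Set V} :
    ∀ {a b : V} (w : T.Walk a b), (∀ x ∈ w.support, x ∈ s) →
      ∀ (ha : a ∈ s) (hb : b ∈ s), (T.induce s).Reachable ⟨a, ha⟩ ⟨b, hb⟩ := by
  intro a b w
  induction w with
  | nil => intro _ ha hb; exact Reachable.refl _
  | cons h q ih =>
    rename_i x y zz
    intro hs ha hb
    have hy : y ∈ s := hs y (by simp [Walk.support_cons])
    have hadj : (T.induce s).Adj ⟨x, ha⟩ ⟨y, hy⟩ := h
    exact hadj.reachable.trans (ih (fun z hz => hs z (by simp [Walk.support_cons, hz])) hy hb)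

lemma connected_induce_union {T : SimpleGraph V} {S₁ S₂ : Finset V}
    (hdis : ∀ x, x ∈ S₁ → x ∈ S₂ → False)
    (hc₁ : (T.induce (S₁ : Set V)).Connected) (hc₂ : (T.induce (S₂ : Set V)).Connected)
    {u₀ v₀ : V} (h : T.Adj u₀ v₀) (hu₀ : u₀ ∈ S₁) (hv₀ : v₀ ∈ S₂) :
    (T.induce ((S₁ ∪ S₂ : Finset V) : Set V)).Connected := by
  have hu₀' : u₀ ∈ ((S₁ ∪ S₂ : Finset V) : Set V) := by
    simp [Finset.mem_union, hu₀]
  have hsub₁ : (S₁ : Set V) ≤ ((S₁ ∪ S₂ : Finset V) : Set V) := by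
    intro x hx
    simp only [Finset.coe_union, Set.mem_union]
    exact Or.inl hx
  have hsub₂ : (S₂ : Set V) ≤ ((S₁ ∪ S₂ : Finset V) : Set V) := by
    intro x hx
    simp only [Finset.coe_union, Set.mem_union]
    exact Or.inr hx
  have reach : ∀ (x : V) (hx : x ∈ ((S₁ ∪ S₂ : Finset V) : Set V)),
      (T.induce ((S₁ ∪ S₂ : Finset V) : Set V)).Reachable ⟨x, hx⟩ ⟨u₀, hu₀'⟩ := by
    intro x hx
    have hx' : x ∈ S₁ ∨ x ∈ S₂ := by
      simpa [Finset.mem_union] using hx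
    rcases hx' with hx1 | hx2
    · have := hc₁.preconnected ⟨x, hx1⟩ ⟨u₀, hu₀⟩
      have hmap := this.map (T.induceHomOfLE hsub₁).toHom
      convert hmap using 2 <;> exact rfl
    · have := hc₂.preconnected ⟨x, hx2⟩ ⟨v₀, hv₀⟩
      have hmap := this.map (T.induceHomOfLE hsub₂).toHom
      have hv₀' : v₀ ∈ ((S₁ ∪ S₂ : Finset V) : Set V) := hsub₂ hv₀
      have hr : (T.induce ((S₁ ∪ S₂ : Finset V) : Set V)).Reachable ⟨x, hx⟩ ⟨v₀, hv₀'⟩ := by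
        convert hmap using 2 <;> exact rfl
      have hadj : (T.induce ((S₁ ∪ S₂ : Finset V) : Set V)).Adj ⟨v₀, hv₀'⟩ ⟨u₀, hu₀'⟩ := h.symm
      exact hr.trans hadj.reachable
  rw [connected_iff]
  refine ⟨?_, ⟨⟨u₀, hu₀'⟩⟩⟩
  rintro ⟨x, hx⟩ ⟨y, hy⟩
  exact (reach x hx).trans (reach y hy).symm

lemma connected_induce_singleton (T : SimpleGraph V) (x : V) :
    (T.induce (({x} : Finset V) : Set V)).Connected := by
  rw [connected_iff]
  refine ⟨?_, ⟨⟨x, by simp⟩⟩⟩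
  rintro ⟨a, ha⟩ ⟨b, hb⟩
  have ha' : a = x := by simpa using ha
  have hb' : b = x := by simpa using hb
  subst ha'; subst hb'
  exact Reachable.refl _

lemma connected_induce_pair {T : SimpleGraph V} {u v : V} (h : T.Adj u v) :
    (T.induce (({u, v} : Finset V) : Set V)).Connected := by
  have hu : u ∈ (({u, v} : Finset V) : Set V) := by simp
  have hv : v ∈ (({u, v} : Finset V) : Set V) := by simp
  have hadj : (T.induce (({u, v} : Finset V) : Set V)).Adj ⟨u, hu⟩ ⟨v, hv⟩ := h
  have reach : ∀ (a : V) (ha : a ∈ (({u, v} : Finset V) : Set V)),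
      (T.induce (({u, v} : Finset V) : Set V)).Reachable ⟨a, ha⟩ ⟨u, hu⟩ := by
    intro a ha
    have ha' : a = u ∨ a = v := by simpa using ha
    rcases ha' with h1 | h1
    · subst h1; exact Reachable.refl _
    · subst h1; exact hadj.symm.reachable
  rw [connected_iff]
  refine ⟨?_, ⟨⟨u, hu⟩⟩⟩
  rintro ⟨a, ha⟩ ⟨b, hb⟩
  exact (reach a ha).trans (reach b hb).symm

lemma adj_of_connected_pair {T : SimpleGraph V} {u v : V} (hne : u ≠ v)
    (h : (T.induce (({u, v} : Finset V) : Set V)).Connected) : T.Adj u v := by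
  have hu : u ∈ (({u, v} : Finset V) : Set V) := by simp
  have hv : v ∈ (({u, v} : Finset V) : Set V) := by simp
  obtain ⟨w⟩ := h.preconnected ⟨u, hu⟩ ⟨v, hv⟩
  have key : ∀ (a b : ↥(({u, v} : Finset V) : Set V))
      (_ : (T.induce (({u, v} : Finset V) : Set V)).Walk a b),
      (a : V) = u → (b : V) = v → T.Adj u v := by
    intro a b w
    induction w with
    | nil => intro h1 h2; exact absurd (h1 ▸ h2 : (_ : V) = v) (h1 ▸ hne)
    | cons hadj q ih =>
      rename_i x y zz
      intro h1 h2
      have hy : (y : V) = u ∨ (y : V) = v := by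
        have := y.2; simpa using this
      rcases hy with hyu | hyv
      · exact ih hyu h2
      · have hTadj : T.Adj (x : V) (y : V) := hadj
        rw [h1, hyv] at hTadj
        exact hTadj
  exact key _ _ w rfl rfl


lemma card_le_edge_add_one {W : Type} [Fintype W] [DecidableEq W] {G : SimpleGraph W}
    [Fintype G.edgeSet] (hc : G.Connected) :
    Fintype.card W ≤ G.edgeFinset.card + 1 := by
  have hne : Nonempty W := hc.nonempty
  obtain ⟨r⟩ := hne
  have H : ∀ v : W, ∃ y, v ≠ r → (G.Adj v y ∧ G.dist r y + 1 = G.dist r v) := by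
    intro v
    by_cases h : v = r
    · exact ⟨r, fun h' => absurd h h'⟩
    · obtain ⟨p, hp1, hp2⟩ := exists_parent hc h
      exact ⟨p, fun _ => ⟨hp1, hp2⟩⟩
  choose f hf using H
  have hinj : ∀ v₁ ∈ Finset.univ.erase r, ∀ v₂ ∈ Finset.univ.erase r,
      s(v₁, f v₁) = s(v₂, f v₂) → v₁ = v₂ := by
    intro v₁ h₁ v₂ h₂ he
    have hv₁ := hf v₁ (Finset.ne_of_mem_erase h₁)
    have hv₂ := hf v₂ (Finset.ne_of_mem_erase h₂)
    rcases Sym2.eq_iff.mp he with ⟨h3, h4⟩ | ⟨h3, h4⟩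
    · exact h3
    · exfalso
      have e1 := hv₁.2
      have e2 := hv₂.2
      rw [← h3] at e2
      rw [h4] at e1
      omega
  have hmap : ∀ v ∈ Finset.univ.erase r, s(v, f v) ∈ G.edgeFinset := by
    intro v hv
    rw [mem_edgeFinset]
    exact (hf v (Finset.ne_of_mem_erase hv)).1
  have := Finset.card_le_card_of_injOn (fun v => s(v, f v)) hmap hinj
  have hcard : (Finset.univ.erase r).card + 1 = Fintype.card W := by
    rw [Finset.card_erase_of_mem (Finset.mem_univ r)]
    have : 1 ≤ Fintype.card W := Fintype.card_pos_iff.mpr ⟨r⟩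
    simp [Finset.card_univ]
    omega
  omega

lemma card_le_internal_add_one {V : Type} [Fintype V] [DecidableEq V] {T : SimpleGraph V}
    {S : Finset V} (hS : (T.induce (S : Set V)).Connected) :
    S.card ≤ (T.edgeFinset.filter fun e => ∃ u v : V, e = s(u, v) ∧ u ∈ S ∧ v ∈ S).card + 1 := by
  classical
  have h1 : Fintype.card ↥(S : Set V) ≤ (T.induce (S : Set V)).edgeFinset.card + 1 :=
    card_le_edge_add_one hS
  have h2 : Fintype.card ↥(S : Set V) = S.card := by
    rw [← Fintype.card_coe S]
    exact Fintype.card_congr (Equiv.subtypeEquivRight fun x => Iff.rfl)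
  have h3 : (T.induce (S : Set V)).edgeFinset.card ≤
      (T.edgeFinset.filter fun e => ∃ u v : V, e = s(u, v) ∧ u ∈ S ∧ v ∈ S).card := by
    have hmaps : ∀ e ∈ (T.induce (S : Set V)).edgeFinset,
        Sym2.map Subtype.val e ∈
          T.edgeFinset.filter fun e => ∃ u v : V, e = s(u, v) ∧ u ∈ S ∧ v ∈ S := by
      intro e he
      induction e using Sym2.ind with
      | _ a b =>
        rw [mem_edgeFinset, mem_edgeSet] at he
        have hT : T.Adj a.val b.val := he
        rw [Sym2.map_pair_eq]
        rw [Finset.mem_filter, mem_edgeFinset, mem_edgeSet]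
        exact ⟨hT, a.val, b.val, rfl, a.2, b.2⟩
    exact Finset.card_le_card_of_injOn _ hmaps
      (Set.InjOn.mono (Set.subset_univ _)
        ((Sym2.map.injective Subtype.val_injective).injOn))
  omega


lemma mem_inn {T : SimpleGraph V} {S : Finset V} {e : Sym2 V} :
    e ∈ inn T S ↔ ∃ a b, e = s(a, b) ∧ T.Adj a b ∧ a ∈ S ∧ b ∈ S := by
  constructor
  · intro he
    simp only [inn, Finset.mem_filter, mem_edgeFinset] at he
    obtain ⟨hedge, u, v, rfl, hu, hv⟩ := he
    exact ⟨u, v, rfl, (mem_edgeSet T).mp hedge, hu, hv⟩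
  · rintro ⟨a, b, rfl, hab, ha, hb⟩
    simp only [inn, Finset.mem_filter, mem_edgeFinset]
    exact ⟨(mem_edgeSet T).mpr hab, a, b, rfl, ha, hb⟩

lemma mem_bdry_pair {T : SimpleGraph V} {S : Finset V} {a b : V} (hab : T.Adj a b) :
    s(a, b) ∈ bdry T S ↔ ((a ∈ S ∧ b ∉ S) ∨ (b ∈ S ∧ a ∉ S)) := by
  rw [mem_bdry]
  constructor
  · rintro ⟨x, y, he, hxy, hx, hy⟩
    rcases Sym2.eq_iff.mp he with ⟨h1, h2⟩ | ⟨h1, h2⟩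
    · exact Or.inl ⟨h1 ▸ hx, h2 ▸ hy⟩
    · exact Or.inr ⟨h2 ▸ hx, h1 ▸ hy⟩
  · rintro (⟨h1, h2⟩ | ⟨h1, h2⟩)
    · exact ⟨a, b, rfl, hab, h1, h2⟩
    · exact ⟨b, a, Sym2.eq_swap.symm, hab.symm, h1, h2⟩

lemma mem_inn_pair {T : SimpleGraph V} {S : Finset V} {a b : V} (hab : T.Adj a b) :
    s(a, b) ∈ inn T S ↔ (a ∈ S ∧ b ∈ S) := by
  rw [mem_inn]
  constructor
  · rintro ⟨x, y, he, hxy, hx, hy⟩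
    rcases Sym2.eq_iff.mp he with ⟨h1, h2⟩ | ⟨h1, h2⟩
    · exact ⟨h1 ▸ hx, h2 ▸ hy⟩
    · exact ⟨by rw [h1]; exact hy, by rw [h2]; exact hx⟩
  · rintro ⟨h1, h2⟩
    exact ⟨a, b, rfl, hab, h1, h2⟩

lemma bdry_union_le {T : SimpleGraph V} {S₁ S₂ : Finset V}
    (hdis : ∀ x, x ∈ S₁ → x ∈ S₂ → False)
    {u₀ v₀ : V} (h : T.Adj u₀ v₀) (hu₀ : u₀ ∈ S₁) (hv₀ : v₀ ∈ S₂) :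
    (bdry T (S₁ ∪ S₂)).card + 2 ≤ (bdry T S₁).card + (bdry T S₂).card := by
  have hsub : bdry T (S₁ ∪ S₂) ⊆ (bdry T S₁ ∪ bdry T S₂).erase s(u₀, v₀) := by
    intro e he
    obtain ⟨a, b, rfl, hab, ha, hb⟩ := mem_bdry.mp he
    rw [Finset.mem_union] at ha
    rw [Finset.mem_erase]
    constructor
    · intro heq
      rcases Sym2.eq_iff.mp heq with ⟨h1, h2⟩ | ⟨h1, h2⟩
      · exact hb (by rw [h2]; exact Finset.mem_union_right _ hv₀)
      · exact hb (by rw [h2]; exact Finset.mem_union_left _ hu₀)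
    · rw [Finset.mem_union]
      rcases ha with ha | ha
      · exact Or.inl ((mem_bdry_pair hab).mpr (Or.inl ⟨ha,
          fun hh => hb (Finset.mem_union_left _ hh)⟩))
      · exact Or.inr ((mem_bdry_pair hab).mpr (Or.inl ⟨ha,
          fun hh => hb (Finset.mem_union_right _ hh)⟩))
  have hm1 : s(u₀, v₀) ∈ bdry T S₁ :=
    (mem_bdry_pair h).mpr (Or.inl ⟨hu₀, fun hh => hdis v₀ hh hv₀⟩)
  have hm2 : s(u₀, v₀) ∈ bdry T S₂ :=
    (mem_bdry_pair h).mpr (Or.inr ⟨hv₀, fun hh => hdis u₀ hu₀ hh⟩)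
  have hinter : 1 ≤ (bdry T S₁ ∩ bdry T S₂).card :=
    Finset.card_pos.mpr ⟨s(u₀, v₀), Finset.mem_inter.mpr ⟨hm1, hm2⟩⟩
  have h1 := Finset.card_le_card hsub
  have h2 := Finset.card_erase_add_one
    (Finset.mem_union_left (bdry T S₂) hm1)
  have h3 := Finset.card_union_add_card_inter (bdry T S₁) (bdry T S₂)
  omega


lemma card_eq_sum_ind {α : Type} [DecidableEq α] {A B : Finset α} (h : A ⊆ B) :
    A.card = ∑ e ∈ B, if e ∈ A then 1 else 0 := by
  rw [← Finset.card_filter]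
  congr 1
  ext e
  simp only [Finset.mem_filter]
  exact ⟨fun he => ⟨h he, he⟩, fun he => he.2⟩

theorem part1 (T : SimpleGraph V) (r : V) (z : ℕ) (P : Finset (Finset V))
    (hz2 : 2 ≤ z) (hzn : z ≤ Fintype.card V) (hbt : IsBinaryRootedTree T r)
    (hP : IsRestrictedPartition T z P) : P.card * z ≤ 32 * Fintype.card V := by
  obtain ⟨hT, hdeg2⟩ := hbt
  obtain ⟨hcov, hnonempty, hgood, hmax⟩ := hP
  set n := Fintype.card V with hn
  have hn32 : n ≤ 32 * n := by omega
  by_cases hP1' : P.card ≤ 1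
  · have h1 : P.card * z ≤ 1 * z := Nat.mul_le_mul_right z hP1'
    omega
  push_neg at hP1'
  choose pt hpt using hcov
  have hptP : ∀ v, pt v ∈ P := fun v => (hpt v).1.1
  have hptv : ∀ v, v ∈ pt v := fun v => (hpt v).1.2
  have hptu : ∀ (v : V) (S : Finset V), S ∈ P → v ∈ S → S = pt v :=
    fun v S h1 h2 => (hpt v).2 S ⟨h1, h2⟩
  have hdisj : ∀ S₁ ∈ P, ∀ S₂ ∈ P, ∀ x : V, x ∈ S₁ → x ∈ S₂ → S₁ = S₂ :=
    fun S₁ h₁ S₂ h₂ x hx₁ hx₂ => (hptu x S₁ h₁ hx₁).trans (hptu x S₂ h₂ hx₂).symm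
  have hgb : ∀ S ∈ P, 1 < S.card → (bdry T S).card ≤ 2 := fun S hS => (hgood S hS).2.2
  have hconnS : ∀ S ∈ P, (T.induce (S : Set V)).Connected := fun S hS => (hgood S hS).2.1
  have hcardS : ∀ S ∈ P, S.card ≤ z := fun S hS => (hgood S hS).1
  have hdeg3 : ∀ u, T.degree u ≤ 3 := degree_le_three hT r hdeg2
  have hb3 : ∀ S ∈ P, (bdry T S).card ≤ 3 := by
    intro S hS
    rcases Nat.lt_or_ge S.card 2 with h | h
    · have h0 : 0 < S.card := Finset.card_pos.mpr (hnonempty S hS)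
      have h1 : S.card = 1 := by omega
      obtain ⟨x, rfl⟩ := Finset.card_eq_one.mp h1
      rw [bdry_singleton_card]
      exact hdeg3 x
    · exact le_trans (hgb S hS h) (by omega)
  have hb1 : ∀ S ∈ P, 1 ≤ (bdry T S).card := by
    intro S hS
    obtain ⟨S', hS', hSne⟩ := Finset.exists_mem_ne hP1' S
    obtain ⟨y, hy⟩ := hnonempty S' hS'
    obtain ⟨x, hx⟩ := hnonempty S hS
    have hyS : y ∉ S := fun hh => hSne (hdisj S' hS' S hS y hy hh)
    obtain ⟨w⟩ := hT.isConnected.preconnected x y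
    exact Finset.card_pos.mpr (walk_boundary w hx hyS)
  have hmerge : ∀ S₁ ∈ P, ∀ S₂ ∈ P, S₁ ≠ S₂ → ∀ u₀ v₀ : V, T.Adj u₀ v₀ → u₀ ∈ S₁ → v₀ ∈ S₂ →
      S₁.card + S₂.card ≤ z → (bdry T S₁).card + (bdry T S₂).card ≤ 4 → False := by
    intro S₁ h₁ S₂ h₂ hne u₀ v₀ hadj hu₀ hv₀ hcard hbd
    have hdis : ∀ x, x ∈ S₁ → x ∈ S₂ → False :=
      fun x hx₁ hx₂ => hne (hdisj _ h₁ _ h₂ x hx₁ hx₂)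
    apply hmax S₁ h₁ S₂ h₂ hne
    refine ⟨le_trans (Finset.card_union_le S₁ S₂) hcard,
      connected_induce_union hdis (hconnS _ h₁) (hconnS _ h₂) hadj hu₀ hv₀, ?_⟩
    intro _
    have hbu := bdry_union_le hdis hadj hu₀ hv₀
    show (bdry T (S₁ ∪ S₂)).card ≤ 2
    omega
  -- cross-edge counting
  have hinndisj : ∀ S₁ ∈ P, ∀ S₂ ∈ P, S₁ ≠ S₂ → Disjoint (inn T S₁) (inn T S₂) := by
    intro S₁ h₁ S₂ h₂ hne
    rw [Finset.disjoint_left]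
    intro e he₁ he₂
    obtain ⟨a, b, rfl, hab, ha, hb⟩ := mem_inn.mp he₁
    exact hne (hdisj _ h₁ _ h₂ a ha ((mem_inn_pair hab).mp he₂).1)
  have hsubE : P.biUnion (inn T) ⊆ T.edgeFinset := by
    intro e he
    rw [Finset.mem_biUnion] at he
    obtain ⟨S, _, he⟩ := he
    exact Finset.filter_subset _ _ he
  have hsum_inn : ∑ S ∈ P, (inn T S).card = (P.biUnion (inn T)).card :=
    (Finset.card_biUnion hinndisj).symm
  have hcross : (T.edgeFinset \ P.biUnion (inn T)).card + (P.biUnion (inn T)).card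
      = T.edgeFinset.card := by
    rw [Finset.card_sdiff_of_subset hsubE]
    have := Finset.card_le_card hsubE
    omega
  have hE : T.edgeFinset.card + 1 = n := hT.card_edgeFinset
  have hcover_card : ∑ S ∈ P, S.card = n := by
    have huniv : P.biUnion (fun S => S) = Finset.univ := by
      apply Finset.eq_univ_of_forall
      intro v
      exact Finset.mem_biUnion.mpr ⟨pt v, hptP v, hptv v⟩
    have := Finset.card_biUnion (t := fun S => S) (fun S₁ h₁ S₂ h₂ hne => by
      rw [Function.onFun, Finset.disjoint_left]
      intro x hx₁ hx₂
      exact hne (hdisj _ h₁ _ h₂ x hx₁ hx₂))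
    rw [← this, huniv, Finset.card_univ]
  have hCrP : (T.edgeFinset \ P.biUnion (inn T)).card + 1 ≤ P.card := by
    have h1 : ∀ S ∈ P, S.card ≤ (inn T S).card + 1 :=
      fun S hS => card_le_internal_add_one (hconnS S hS)
    have h2 : ∑ S ∈ P, S.card ≤ ∑ S ∈ P, ((inn T S).card + 1) := Finset.sum_le_sum h1
    rw [Finset.sum_add_distrib, Finset.sum_const, smul_eq_mul, mul_one] at h2
    have hP0 : 0 < P.card := by omega
    have hn0 : 0 < n := by omega
    omega
  set Cr := T.edgeFinset \ P.biUnion (inn T) with hCrdef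
  have hbsum : ∑ S ∈ P, (bdry T S).card = 2 * Cr.card := by
    have hstep : ∀ S : Finset V, (bdry T S).card
        = ∑ e ∈ T.edgeFinset, if e ∈ bdry T S then 1 else 0 :=
      fun S => card_eq_sum_ind (Finset.filter_subset _ _)
    calc ∑ S ∈ P, (bdry T S).card
        = ∑ S ∈ P, ∑ e ∈ T.edgeFinset, if e ∈ bdry T S then 1 else 0 :=
          Finset.sum_congr rfl fun S _ => hstep S
      _ = ∑ e ∈ T.edgeFinset, ∑ S ∈ P, if e ∈ bdry T S then 1 else 0 := Finset.sum_comm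
      _ = ∑ e ∈ T.edgeFinset, if e ∈ Cr then 2 else 0 := by
          apply Finset.sum_congr rfl
          intro e he
          rw [← Finset.card_filter]
          induction e using Sym2.ind with
          | _ a b =>
            have hab : T.Adj a b := (mem_edgeSet T).mp ((mem_edgeFinset).mp he)
            by_cases hcr : s(a, b) ∈ Cr
            · rw [if_pos hcr]
              have hnotin : s(a, b) ∉ P.biUnion (inn T) := (Finset.mem_sdiff.mp hcr).2
              have hptne : pt a ≠ pt b := by
                intro hh
                apply hnotin
                exact Finset.mem_biUnion.mpr ⟨pt a, hptP a,
                  (mem_inn_pair hab).mpr ⟨hptv a, hh ▸ hptv b⟩⟩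
              have hfe : P.filter (fun S => s(a, b) ∈ bdry T S) = {pt a, pt b} := by
                ext S
                rw [Finset.mem_filter, Finset.mem_insert, Finset.mem_singleton]
                constructor
                · rintro ⟨hSP, hSb⟩
                  rcases (mem_bdry_pair hab).mp hSb with ⟨h1, _⟩ | ⟨h1, _⟩
                  · exact Or.inl (hptu a S hSP h1)
                  · exact Or.inr (hptu b S hSP h1)
                · rintro (rfl | rfl)
                  · refine ⟨hptP a, (mem_bdry_pair hab).mpr (Or.inl ⟨hptv a, ?_⟩)⟩
                    intro hh
                    exact hptne (hptu b (pt a) (hptP a) hh)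
                  · refine ⟨hptP b, (mem_bdry_pair hab).mpr (Or.inr ⟨hptv b, ?_⟩)⟩
                    intro hh
                    exact hptne (hptu a (pt b) (hptP b) hh).symm
              rw [hfe]
              rw [Finset.card_insert_of_notMem (by simpa using hptne), Finset.card_singleton]
            · rw [if_neg hcr]
              have hin : s(a, b) ∈ P.biUnion (inn T) := by
                by_contra hh
                exact hcr (Finset.mem_sdiff.mpr ⟨he, hh⟩)
              obtain ⟨S₀, hS₀P, hS₀⟩ := Finset.mem_biUnion.mp hin
              obtain ⟨ha₀, hb₀⟩ := (mem_inn_pair hab).mp hS₀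
              have hfe : P.filter (fun S => s(a, b) ∈ bdry T S) = ∅ := by
                rw [Finset.filter_eq_empty_iff]
                intro S hSP hSb
                rcases (mem_bdry_pair hab).mp hSb with ⟨h1, h2⟩ | ⟨h1, h2⟩
                · exact h2 ((hdisj S hSP S₀ hS₀P a h1 ha₀) ▸ hb₀)
                · exact h2 ((hdisj S hSP S₀ hS₀P b h1 hb₀) ▸ ha₀)
              rw [hfe, Finset.card_empty]
      _ = ∑ e ∈ T.edgeFinset.filter (fun e => e ∈ Cr), 2 := (Finset.sum_filter _ _).symm
      _ = 2 * Cr.card := by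
          have hfeq : T.edgeFinset.filter (fun e => e ∈ Cr) = Cr := by
            ext e
            rw [Finset.mem_filter]
            exact ⟨fun h => h.2, fun h => ⟨(Finset.sdiff_subset) h, h⟩⟩
          rw [hfeq, Finset.sum_const, smul_eq_mul]
          ring
  -- neighbour structure lemma
  have hnbr : ∀ S ∈ P, 2 * S.card ≤ z → ∀ e ∈ bdry T S, ∃ S', S' ∈ P ∧ e ∈ bdry T S' ∧
      S' ≠ S ∧ (2 * S'.card ≤ z → 5 ≤ (bdry T S).card + (bdry T S').card) := by
    intro S hS hlt e he
    obtain ⟨a, b, rfl, hab, ha, hb⟩ := mem_bdry.mp he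
    have hbpt : b ∈ pt b := hptv b
    have hSne : pt b ≠ S := fun hh => hb (hh ▸ hbpt)
    have haN : a ∉ pt b := by
      intro hh
      exact hb ((hdisj S hS (pt b) (hptP b) a ha hh) ▸ hbpt)
    refine ⟨pt b, hptP b, (mem_bdry_pair hab).mpr (Or.inr ⟨hbpt, haN⟩), hSne, ?_⟩
    intro hlt'
    by_contra hcon
    push_neg at hcon
    exact hmerge S hS (pt b) (hptP b) hSne.symm a b hab ha hbpt (by omega) (by omega)
  -- classes
  set H := P.filter (fun S => z < 2 * S.card) with hH
  set A1 := P.filter (fun S => 2 * S.card ≤ z ∧ (bdry T S).card = 1) with hA1def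
  set A2 := P.filter (fun S => 2 * S.card ≤ z ∧ (bdry T S).card = 2) with hA2def
  set A3 := P.filter (fun S => 2 * S.card ≤ z ∧ (bdry T S).card = 3) with hA3def
  have hclass : P.card = H.card + A1.card + A2.card + A3.card := by
    have key : ∀ S ∈ P, (1 : ℕ) =
        (if z < 2 * S.card then 1 else 0)
        + (if 2 * S.card ≤ z ∧ (bdry T S).card = 1 then 1 else 0)
        + (if 2 * S.card ≤ z ∧ (bdry T S).card = 2 then 1 else 0)
        + (if 2 * S.card ≤ z ∧ (bdry T S).card = 3 then 1 else 0) := by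
      intro S hS
      have h1 := hb1 S hS
      have h3 := hb3 S hS
      split_ifs <;> omega
    have hsum : ∑ S ∈ P, (1 : ℕ) = ∑ S ∈ P,
        ((if z < 2 * S.card then 1 else 0)
        + ((if 2 * S.card ≤ z ∧ (bdry T S).card = 1 then 1 else 0)
        + ((if 2 * S.card ≤ z ∧ (bdry T S).card = 2 then 1 else 0)
        + (if 2 * S.card ≤ z ∧ (bdry T S).card = 3 then 1 else 0)))) := by
      apply Finset.sum_congr rfl
      intro S hS
      have := key S hS
      omega
    rw [Finset.sum_add_distrib, Finset.sum_add_distrib, Finset.sum_add_distrib] at hsum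
    rw [← Finset.card_filter, ← Finset.card_filter, ← Finset.card_filter,
      ← Finset.card_filter] at hsum
    rw [Finset.sum_const, smul_eq_mul, mul_one] at hsum
    rw [hH, hA1def, hA2def, hA3def]
    omega
  have hsum_lb : P.card + A2.card + 2 * A3.card ≤ ∑ S ∈ P, (bdry T S).card := by
    have key : ∀ S ∈ P, 1 + (if 2 * S.card ≤ z ∧ (bdry T S).card = 2 then 1 else 0)
        + 2 * (if 2 * S.card ≤ z ∧ (bdry T S).card = 3 then 1 else 0) ≤ (bdry T S).card := by
      intro S hS
      have h1 := hb1 S hS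
      split_ifs <;> omega
    have h2 := Finset.sum_le_sum key
    rw [Finset.sum_add_distrib, Finset.sum_add_distrib, Finset.sum_const, smul_eq_mul,
      mul_one, ← Finset.card_filter, ← Finset.mul_sum, ← Finset.card_filter] at h2
    rw [hA2def, hA3def]
    omega
  have hH_big : H.card * (z + 1) ≤ 2 * n := by
    calc H.card * (z + 1) = ∑ _S ∈ H, (z + 1) := by
          rw [Finset.sum_const, smul_eq_mul]
      _ ≤ ∑ S ∈ H, 2 * S.card := by
          apply Finset.sum_le_sum
          intro S hS
          have := (Finset.mem_filter.mp hS).2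
          omega
      _ ≤ ∑ S ∈ P, 2 * S.card := Finset.sum_le_sum_of_subset (Finset.filter_subset _ _)
      _ = 2 * ∑ S ∈ P, S.card := by rw [Finset.mul_sum]
      _ = 2 * n := by rw [hcover_card]
  have hNV : Nonempty V := by
    have : 0 < n := by omega
    exact Fintype.card_pos_iff.mp this
  have hIH : Inhabited V := Classical.inhabited_of_nonempty hNV
  set f : Finset V → Sym2 V := fun S =>
    if h : (bdry T S).Nonempty then h.choose else s(default, default) with hfdef
  have hfS : ∀ S ∈ P, f S ∈ bdry T S := by
    intro S hS
    have hne : (bdry T S).Nonempty := Finset.card_pos.mp (hb1 S hS)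
    simp only [hfdef, dif_pos hne]
    exact hne.choose_spec
  have hHsub : H ⊆ P := Finset.filter_subset _ _
  have hA3sub : A3 ⊆ P := Finset.filter_subset _ _
  have hbiH : ∀ (Q : Finset (Finset V)), Q ⊆ P → (Q.biUnion (bdry T)).card ≤ 3 * Q.card := by
    intro Q hQ
    calc (Q.biUnion (bdry T)).card ≤ ∑ S ∈ Q, (bdry T S).card := Finset.card_biUnion_le
      _ ≤ ∑ _S ∈ Q, 3 := Finset.sum_le_sum (fun S hS => hb3 S (hQ hS))
      _ = 3 * Q.card := by rw [Finset.sum_const, smul_eq_mul]; ring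
  have hA1bound : A1.card ≤ 3 * H.card := by
    have hmaps : ∀ S ∈ A1, f S ∈ H.biUnion (bdry T) := by
      intro S hS1
      have hSP : S ∈ P := (Finset.mem_filter.mp hS1).1
      obtain ⟨hlt, hbS⟩ := (Finset.mem_filter.mp hS1).2
      obtain ⟨S', hS'P, heS', hne', himp⟩ := hnbr S hSP hlt (f S) (hfS S hSP)
      have hheavy : z < 2 * S'.card := by
        by_contra hh
        push_neg at hh
        have h5 := himp hh
        have h3 := hb3 S' hS'P
        omega
      exact Finset.mem_biUnion.mpr ⟨S', Finset.mem_filter.mpr ⟨hS'P, hheavy⟩, heS'⟩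
    have hinj : ∀ S₁ ∈ A1, ∀ S₂ ∈ A1, f S₁ = f S₂ → S₁ = S₂ := by
      intro S₁ h₁ S₂ h₂ hf
      by_contra hne
      have hP₁ : S₁ ∈ P := (Finset.mem_filter.mp h₁).1
      have hP₂ : S₂ ∈ P := (Finset.mem_filter.mp h₂).1
      obtain ⟨hl₁, hc₁⟩ := (Finset.mem_filter.mp h₁).2
      obtain ⟨hl₂, hc₂⟩ := (Finset.mem_filter.mp h₂).2
      have he₂ := hfS S₂ hP₂
      obtain ⟨a, b, heq, hab, ha, hb⟩ := mem_bdry.mp he₂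
      have he₁ : s(a, b) ∈ bdry T S₁ := by rw [← heq, ← hf]; exact hfS S₁ hP₁
      rcases (mem_bdry_pair hab).mp he₁ with ⟨h1, h2⟩ | ⟨h1, h2⟩
      · exact hne (hdisj S₁ hP₁ S₂ hP₂ a h1 ha)
      · exact hmerge S₂ hP₂ S₁ hP₁ (Ne.symm hne) a b hab ha h1 (by omega) (by omega)
    have := Finset.card_le_card_of_injOn f hmaps
      (fun S₁ h₁ S₂ h₂ hf => hinj S₁ h₁ S₂ h₂ hf)
    calc A1.card ≤ (H.biUnion (bdry T)).card := this
      _ ≤ 3 * H.card := hbiH H hHsub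
  have hA2bound : 2 * A2.card ≤ 3 * (H.card + A3.card) := by
    have hdisbd : ∀ S₁ ∈ A2, ∀ S₂ ∈ A2, S₁ ≠ S₂ → Disjoint (bdry T S₁) (bdry T S₂) := by
      intro S₁ h₁ S₂ h₂ hne
      have hP₁ : S₁ ∈ P := (Finset.mem_filter.mp h₁).1
      have hP₂ : S₂ ∈ P := (Finset.mem_filter.mp h₂).1
      obtain ⟨hl₁, hc₁⟩ := (Finset.mem_filter.mp h₁).2
      obtain ⟨hl₂, hc₂⟩ := (Finset.mem_filter.mp h₂).2
      rw [Finset.disjoint_left]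
      intro e he₁ he₂
      obtain ⟨a, b, rfl, hab, ha, hb⟩ := mem_bdry.mp he₁
      rcases (mem_bdry_pair hab).mp he₂ with ⟨h1, h2⟩ | ⟨h1, h2⟩
      · exact hne (hdisj S₁ hP₁ S₂ hP₂ a ha h1)
      · exact hmerge S₁ hP₁ S₂ hP₂ hne a b hab ha h1 (by omega) (by omega)
    have hsum2 : ∑ S ∈ A2, (bdry T S).card = 2 * A2.card := by
      have : ∀ S ∈ A2, (bdry T S).card = 2 := fun S hS => (Finset.mem_filter.mp hS).2.2
      rw [Finset.sum_congr rfl this, Finset.sum_const, smul_eq_mul]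
      ring
    have hbiu : (A2.biUnion (bdry T)).card = 2 * A2.card := by
      rw [Finset.card_biUnion hdisbd, hsum2]
    have hsubU : A2.biUnion (bdry T) ⊆ (H ∪ A3).biUnion (bdry T) := by
      intro e he
      obtain ⟨S, hSA2, heS⟩ := Finset.mem_biUnion.mp he
      have hSP : S ∈ P := (Finset.mem_filter.mp hSA2).1
      obtain ⟨hlt, hbS⟩ := (Finset.mem_filter.mp hSA2).2
      obtain ⟨S', hS'P, heS', hne', himp⟩ := hnbr S hSP hlt e heS
      have hmem : S' ∈ H ∪ A3 := by
        rw [Finset.mem_union]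
        by_cases hh : z < 2 * S'.card
        · exact Or.inl (Finset.mem_filter.mpr ⟨hS'P, hh⟩)
        · push_neg at hh
          have h5 := himp hh
          have h3 := hb3 S' hS'P
          exact Or.inr (Finset.mem_filter.mpr ⟨hS'P, hh, by omega⟩)
      exact Finset.mem_biUnion.mpr ⟨S', hmem, heS'⟩
    calc 2 * A2.card = (A2.biUnion (bdry T)).card := hbiu.symm
      _ ≤ ((H ∪ A3).biUnion (bdry T)).card := Finset.card_le_card hsubU
      _ ≤ 3 * (H ∪ A3).card := hbiH (H ∪ A3) (Finset.union_subset hHsub hA3sub)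
      _ ≤ 3 * (H.card + A3.card) := by
          have := Finset.card_union_le H A3
          omega
  -- final arithmetic
  have hfinal : 2 * P.card ≤ 31 * H.card := by omega
  have h16 : P.card ≤ 16 * H.card := by omega
  have hhz : H.card * z ≤ 2 * n := by
    have h1 : H.card * z ≤ H.card * (z + 1) := Nat.mul_le_mul_left _ (by omega)
    omega
  calc P.card * z ≤ (16 * H.card) * z := Nat.mul_le_mul_right z h16
    _ = 16 * (H.card * z) := by ring
    _ ≤ 16 * (2 * n) := Nat.mul_le_mul_left 16 hhz
    _ = 32 * n := by ring


theorem pairing_exists (n : ℕ) : ∀ (V : Type) (_ : Fintype V) (_ : DecidableEq V),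
    Fintype.card V = n → ∀ (T : SimpleGraph V) (w : V → ℕ), T.IsTree →
    (∀ v, T.degree v ≤ w v) → (∀ v, w v ≤ 3) →
    ∃ Q : Finset (Finset V),
      (∀ S ∈ Q, ∃ u v : V, T.Adj u v ∧ S = {u, v} ∧ w u + w v ≤ 4) ∧
      (∀ S₁ ∈ Q, ∀ S₂ ∈ Q, S₁ ≠ S₂ → Disjoint S₁ S₂) ∧
      n ≤ 6 * Q.card + 5 + 3 * ∑ v, (w v - T.degree v) := by
  induction n using Nat.strong_induction_on with
  | _ n IH =>
  intro V instF instD hcard T w hT hdw hw3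
  by_cases hn5 : n ≤ 5
  · exact ⟨∅, by simp, by simp, by simpa using Nat.le_add_right_of_le (by omega)⟩
  push_neg at hn5
  have hn6 : 6 ≤ n := hn5
  have hNV : 0 < Fintype.card V := by omega
  obtain ⟨r⟩ := Fintype.card_pos_iff.mp hNV
  have hdeg3 : ∀ v, T.degree v ≤ 3 := fun v => (hdw v).trans (hw3 v)
  obtain ⟨ℓ, -, hmax⟩ := Finset.exists_max_image Finset.univ (T.dist r) ⟨r, Finset.mem_univ r⟩
  have hmax' : ∀ v : V, T.dist r v ≤ T.dist r ℓ := fun v => hmax v (Finset.mem_univ v)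
  set d := T.dist r ℓ with hd
  have hd2 : 2 ≤ d := by
    by_contra hcon
    push_neg at hcon
    have hsub : (Finset.univ : Finset V) ⊆ insert r (T.neighborFinset r) := by
      intro v _
      have hv : T.dist r v ≤ 1 := by have := hmax' v; omega
      rcases Nat.lt_or_ge (T.dist r v) 1 with h | h
      · have : T.dist r v = 0 := by omega
        have : r = v := (hT.isConnected.dist_eq_zero_iff).mp this
        exact Finset.mem_insert.mpr (Or.inl this.symm)
      · have h1 : T.dist r v = 1 := by omega
        exact Finset.mem_insert.mpr (Or.inr ((mem_neighborFinset T r v).mpr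
          (dist_eq_one_iff_adj.mp h1)))
    have hcard2 := Finset.card_le_card hsub
    have h3 := Finset.card_insert_le r (T.neighborFinset r)
    rw [Finset.card_univ, hcard] at hcard2
    have := hdeg3 r
    rw [card_neighborFinset_eq_degree] at *
    omega
  have hℓr : ℓ ≠ r := by
    intro h
    rw [h] at hd
    simp [SimpleGraph.dist_self] at hd
    omega
  obtain ⟨p, hpadj, hpd⟩ := exists_parent hT.isConnected hℓr
  have hpr : p ≠ r := by
    intro h
    rw [h] at hpd
    simp [SimpleGraph.dist_self] at hpd
    omega
  obtain ⟨q, hqadj, hqd⟩ := exists_parent hT.isConnected hpr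
  have hleaf : ∀ x : V, T.dist r x = d → ∀ y, T.Adj x y → T.dist r y + 1 = d := by
    intro x hx y hy
    rcases adj_dist_cases hT r hy with h | h
    · exfalso; have := hmax' y; omega
    · omega
  have hleafnb : ∀ x : V, T.dist r x = d → ∀ y₁ y₂, T.Adj x y₁ → T.Adj x y₂ → y₁ = y₂ := by
    intro x hx y₁ y₂ h₁ h₂
    exact parent_unique hT r h₁ h₂ (by rw [hx]; exact hleaf x hx y₁ h₁)
      (by rw [hx]; exact hleaf x hx y₂ h₂)
  set Ch := T.neighborFinset p \ {q} with hCh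
  have hchd : ∀ c ∈ Ch, T.Adj p c ∧ T.dist r c = d := by
    intro c hc
    rw [hCh, Finset.mem_sdiff, mem_neighborFinset, Finset.mem_singleton] at hc
    obtain ⟨hcadj, hcq⟩ := hc
    refine ⟨hcadj, ?_⟩
    rcases adj_dist_cases hT r hcadj with h | h
    · omega
    · exfalso
      exact hcq (parent_unique hT r hcadj hqadj (by omega) hqd)
  have hℓCh : ℓ ∈ Ch := by
    rw [hCh, Finset.mem_sdiff, mem_neighborFinset, Finset.mem_singleton]
    refine ⟨hpadj.symm, ?_⟩
    intro hh
    rw [hh] at hd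
    omega
  have hChleaf : ∀ c ∈ Ch, ∀ y, T.Adj c y → y = p := by
    intro c hc y hy
    exact hleafnb c (hchd c hc).2 y p hy (hchd c hc).1.symm
  have hChnb : ∀ c ∈ Ch, T.neighborFinset c = {p} := by
    intro c hc
    apply Finset.eq_singleton_iff_unique_mem.mpr
    refine ⟨(mem_neighborFinset T c p).mpr (hchd c hc).1.symm, ?_⟩
    intro y hy
    exact hChleaf c hc y ((mem_neighborFinset T c y).mp hy)
  have hChdeg : ∀ c ∈ Ch, T.degree c = 1 := by
    intro c hc
    rw [← card_neighborFinset_eq_degree, hChnb c hc, Finset.card_singleton]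
  have hqmem : q ∈ T.neighborFinset p := (mem_neighborFinset T p q).mpr hqadj
  have hChcard : Ch.card + 1 = T.degree p := by
    rw [hCh, Finset.card_sdiff_of_subset (Finset.singleton_subset_iff.mpr hqmem),
      Finset.card_singleton, ← card_neighborFinset_eq_degree]
    have : 1 ≤ (T.neighborFinset p).card := Finset.card_pos.mpr ⟨q, hqmem⟩
    omega
  set W := insert p Ch with hW
  have hpCh : p ∉ Ch := by
    rw [hCh, Finset.mem_sdiff, mem_neighborFinset]
    rintro ⟨hc, -⟩
    exact hc.ne rfl
  have hWcard : W.card = Ch.card + 1 := Finset.card_insert_of_notMem hpCh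
  have hWle : W.card ≤ 3 := by
    have := hdeg3 p
    omega
  have hW2 : 2 ≤ W.card := by
    have : 1 ≤ Ch.card := Finset.card_pos.mpr ⟨ℓ, hℓCh⟩
    omega
  have hqp : q ≠ p := fun hh => (hqadj.ne hh.symm)
  have hqW : q ∉ W := by
    rw [hW, Finset.mem_insert]
    rintro (hh | hh)
    · exact hqp hh
    · rw [hCh, Finset.mem_sdiff, Finset.mem_singleton] at hh
      exact hh.2 rfl
  have hdp1 : T.dist r p + 1 = d := hpd
  have hrW : r ∉ W := by
    rw [hW, Finset.mem_insert]
    rintro (hh | hh)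
    · rw [← hh] at hdp1
      simp [SimpleGraph.dist_self] at hdp1
      omega
    · have := (hchd r hh).2
      simp [SimpleGraph.dist_self] at this
      omega
  have hkey : ∀ x, x ∉ W → ∀ y ∈ W, T.Adj x y → x = q := by
    intro x hxW y hyW hxy
    rcases Finset.mem_insert.mp hyW with rfl | hyCh
    · by_contra hxq
      apply hxW
      rw [hW, Finset.mem_insert]
      right
      rw [hCh, Finset.mem_sdiff, mem_neighborFinset, Finset.mem_singleton]
      exact ⟨hxy.symm, hxq⟩
    · exfalso
      have hxp := hChleaf y hyCh x hxy.symm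
      rw [hxp] at hxW
      exact hxW (Finset.mem_insert_self p Ch)
  set U : Set V := ((Wᶜ : Finset V) : Set V) with hU
  have hmemU : ∀ x : V, x ∈ U ↔ x ∉ W := by
    intro x
    rw [hU]
    simp
  have hqU : q ∈ U := (hmemU q).mpr hqW
  have hrU : r ∈ U := (hmemU r).mpr hrW
  -- walks avoiding W
  have hwalkU : ∀ k : ℕ, ∀ x : V, T.dist r x = k → x ∉ W →
      ∃ wk : T.Walk r x, ∀ s ∈ wk.support, s ∉ W := by
    intro k
    induction k using Nat.strong_induction_on with
    | _ k IHk =>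
    intro x hx hxW
    by_cases hxr : x = r
    · subst hxr
      exact ⟨Walk.nil, by intro s hs; simp at hs; rwa [hs]⟩
    · obtain ⟨y, hyadj, hyd⟩ := exists_parent hT.isConnected hxr
      have hyW : y ∉ W := by
        intro hyW'
        have hxq := hkey x hxW y hyW' hyadj
        rcases Finset.mem_insert.mp hyW' with h1 | h1
        · rw [hxq] at hyd
          rw [h1] at hyd
          omega
        · have hxp := hChleaf y h1 x hyadj.symm
          rw [hxp] at hxq
          exact hqp hxq.symm
      obtain ⟨wk', hwk'⟩ := IHk (T.dist r y) (by omega) y rfl hyW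
      refine ⟨wk'.concat hyadj.symm, ?_⟩
      intro s hs
      rw [Walk.support_concat, List.mem_append] at hs
      rcases hs with h1 | h1
      · exact hwk' s h1
      · simp only [List.mem_singleton] at h1
        rw [h1]; exact hxW
  have hconnU : (T.induce U).Connected := by
    have hreach : ∀ (x : V) (hx : x ∈ U),
        (T.induce U).Reachable ⟨x, hx⟩ ⟨r, hrU⟩ := by
      intro x hx
      obtain ⟨wk, hwk⟩ := hwalkU (T.dist r x) x rfl ((hmemU x).mp hx)
      exact (induce_reachable wk (fun s hs => (hmemU s).mpr (hwk s hs)) hrU hx).symm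
    rw [connected_iff]
    refine ⟨?_, ⟨⟨q, hqU⟩⟩⟩
    rintro ⟨x, hx⟩ ⟨y, hy⟩
    exact (hreach x hx).trans (hreach y hy).symm
  have hacyc : (T.induce U).IsAcyclic := by
    intro v c hc
    exact hT.IsAcyclic _ (hc.map (Function.injective_id.comp Subtype.val_injective :
      Function.Injective ((SimpleGraph.Embedding.induce U).toHom : _ → V)))
  have hT' : (T.induce U).IsTree := ⟨hconnU, hacyc⟩
  -- degrees in the induced graph
  have himg : ∀ (x : V) (hx : x ∈ U),
      ((T.induce U).neighborFinset ⟨x, hx⟩).image Subtype.val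
        = T.neighborFinset x ∩ Wᶜ := by
    intro x hx
    ext y
    simp only [Finset.mem_image, mem_neighborFinset, Finset.mem_inter, Finset.mem_compl]
    constructor
    · rintro ⟨b, hb, rfl⟩
      exact ⟨hb, (hmemU _).mp b.2⟩
    · rintro ⟨hadj, hyW⟩
      exact ⟨⟨y, (hmemU y).mpr hyW⟩, hadj, rfl⟩
  have hdegeq : ∀ (x : V) (hx : x ∈ U),
      (T.induce U).degree ⟨x, hx⟩ = (T.neighborFinset x ∩ Wᶜ).card := by
    intro x hx
    rw [← himg x hx, Finset.card_image_of_injective _ Subtype.val_injective,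
      card_neighborFinset_eq_degree]
  have hdeg'x : ∀ (x : V) (hx : x ∈ U), x ≠ q → (T.induce U).degree ⟨x, hx⟩ = T.degree x := by
    intro x hx hxq
    rw [hdegeq x hx, Finset.inter_eq_left.mpr ?_, card_neighborFinset_eq_degree]
    intro y hy
    rw [Finset.mem_compl]
    intro hyW
    exact hxq (hkey x ((hmemU x).mp hx) y hyW ((mem_neighborFinset T x y).mp hy))
  have hppos : 1 ≤ T.degree q := by
    rw [← card_neighborFinset_eq_degree]
    exact Finset.card_pos.mpr ⟨p, (mem_neighborFinset T q p).mpr hqadj.symm⟩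
  have hdegq' : (T.induce U).degree ⟨q, hqU⟩ + 1 = T.degree q := by
    rw [hdegeq q hqU]
    have hset : T.neighborFinset q ∩ Wᶜ = T.neighborFinset q \ {p} := by
      ext y
      simp only [Finset.mem_inter, Finset.mem_compl, Finset.mem_sdiff,
        Finset.mem_singleton, mem_neighborFinset]
      constructor
      · rintro ⟨hadj, hyW⟩
        refine ⟨hadj, ?_⟩
        intro hyp
        rw [hyp] at hyW
        exact hyW (Finset.mem_insert_self p Ch)
      · rintro ⟨hadj, hyp⟩
        refine ⟨hadj, ?_⟩
        intro hyW
        rcases Finset.mem_insert.mp hyW with h1 | h1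
        · exact hyp h1
        · exact hqp (hChleaf y h1 q hadj.symm)
    rw [hset, Finset.card_sdiff_of_subset (Finset.singleton_subset_iff.mpr
      ((mem_neighborFinset T q p).mpr hqadj.symm)), Finset.card_singleton,
      ← card_neighborFinset_eq_degree]
    have := hppos
    rw [← card_neighborFinset_eq_degree] at this
    omega
  -- cardinality bookkeeping
  have hmemWc : ∀ x : V, x ∈ (Wᶜ : Finset V) ↔ x ∈ U := by
    intro x
    rw [hmemU, Finset.mem_compl]
  have hcardU : Fintype.card ↥U + W.card = n := by
    have h1 : Fintype.card ↥U = (Wᶜ : Finset V).card := by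
      rw [← Fintype.card_coe (Wᶜ : Finset V)]
      exact Fintype.card_congr (Equiv.subtypeEquivRight (fun x => (hmemWc x).symm))
    rw [h1, Finset.card_compl, hcard]
    have := Finset.card_le_univ W
    rw [hcard] at this
    omega
  have hm_lt : Fintype.card ↥U < n := by omega
  set w2 : ↥U → ℕ := fun x => w x.val with hw2
  obtain ⟨Q', hQ'pairs, hQ'disj, hQ'bound⟩ := IH (Fintype.card ↥U) hm_lt ↥U inferInstance
    inferInstance rfl (T.induce U) w2 hT'
    (by
      rintro ⟨xv, hx⟩
      by_cases hxq : xv = q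
      · subst hxq
        have h1 : (T.induce U).degree ⟨xv, hx⟩ + 1 = T.degree xv := hdegq'
        have h2 := hdw xv
        simp only [hw2]
        have h3 : (T.induce U).degree ⟨xv, hx⟩ ≤ w xv := by omega
        convert h3
      · have h1 : (T.induce U).degree ⟨xv, hx⟩ = T.degree xv := hdeg'x xv hx hxq
        simp only [hw2]
        convert hdw xv using 1
        convert h1)
    (fun x => hw3 x.val)
  -- phantom sum bookkeeping
  have hsplit : (∑ v ∈ W, (w v - T.degree v)) + (∑ v ∈ Wᶜ, (w v - T.degree v))
      = ∑ v : V, (w v - T.degree v) :=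
    Finset.sum_add_sum_compl W _
  have hph' : ∑ x : ↥U, (w2 x - (T.induce U).degree x)
      = (∑ v ∈ Wᶜ, (w v - T.degree v)) + 1 := by
    have hterm : ∀ x : ↥U, (w2 x - (T.induce U).degree x)
        = (w x.val - T.degree x.val) + (if x.val = q then 1 else 0) := by
      rintro ⟨xv, hx⟩
      by_cases hxq : xv = q
      · have h1 : (T.induce U).degree ⟨xv, hx⟩ + 1 = T.degree xv := by
          subst hxq; exact hdegq'
        have h2 := hdw xv
        simp only [hw2, if_pos hxq]
        omega
      · simp only [hw2, if_neg hxq]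
        rw [hdeg'x xv hx hxq]
        omega
    calc ∑ x : ↥U, (w2 x - (T.induce U).degree x)
        = ∑ x : ↥U, ((fun v => (w v - T.degree v) + (if v = q then 1 else 0)) x.val) :=
          Finset.sum_congr rfl (fun x _ => hterm x)
      _ = ∑ v ∈ (Wᶜ : Finset V), ((w v - T.degree v) + (if v = q then 1 else 0)) := by
          rw [← Finset.sum_coe_sort (Wᶜ : Finset V)
            (fun v => (w v - T.degree v) + (if v = q then 1 else 0))]
          exact Fintype.sum_equiv (Equiv.subtypeEquivRight (fun x => (hmemWc x).symm)).symm _ _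
            (fun x => rfl)
      _ = (∑ v ∈ Wᶜ, (w v - T.degree v)) + 1 := by
          rw [Finset.sum_add_distrib, Finset.sum_ite_eq' (Wᶜ : Finset V) q (fun _ => 1)]
          rw [if_pos ((hmemWc q).mpr hqU)]
  -- lifting
  have hliftpairs : ∀ S ∈ Q'.image (fun S => S.image Subtype.val),
      ∃ u v : V, T.Adj u v ∧ S = {u, v} ∧ w u + w v ≤ 4 := by
    intro S hS
    obtain ⟨S', hS', rfl⟩ := Finset.mem_image.mp hS
    obtain ⟨u', v', hadj, hSeq, hw4⟩ := hQ'pairs S' hS'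
    refine ⟨u'.val, v'.val, hadj, ?_, hw4⟩
    rw [hSeq, Finset.image_insert, Finset.image_singleton]
  have hliftW : ∀ (S' : Finset ↥U), ∀ x ∈ S'.image Subtype.val, x ∉ W := by
    intro S' x hx
    obtain ⟨b, -, rfl⟩ := Finset.mem_image.mp hx
    exact (hmemU _).mp b.2
  have hliftinj : ∀ S₁ ∈ Q', ∀ S₂ ∈ Q',
      S₁.image Subtype.val = S₂.image Subtype.val → S₁ = S₂ := by
    intro S₁ _ S₂ _ hh
    exact Finset.image_injective Subtype.val_injective hh
  have hliftdisj : ∀ S₁ ∈ Q'.image (fun S => S.image Subtype.val),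
      ∀ S₂ ∈ Q'.image (fun S => S.image Subtype.val), S₁ ≠ S₂ → Disjoint S₁ S₂ := by
    intro S₁ h₁ S₂ h₂ hne
    obtain ⟨S₁', hS₁', rfl⟩ := Finset.mem_image.mp h₁
    obtain ⟨S₂', hS₂', rfl⟩ := Finset.mem_image.mp h₂
    have hne' : S₁' ≠ S₂' := fun hh => hne (by rw [hh])
    exact (Finset.disjoint_image Subtype.val_injective).mpr (hQ'disj S₁' hS₁' S₂' hS₂' hne')
  have hliftcard : (Q'.image (fun S => S.image Subtype.val)).card = Q'.card :=
    Finset.card_image_of_injective _ (Finset.image_injective Subtype.val_injective)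
  set phW := ∑ v ∈ W, (w v - T.degree v) with hphW
  by_cases hcase : ∃ c ∈ Ch, w c + w p ≤ 4
  · -- Case A : add the pair {c, p}
    obtain ⟨c, hcCh, hcw⟩ := hcase
    have hcW : c ∈ W := Finset.mem_insert_of_mem hcCh
    have hpW : p ∈ W := Finset.mem_insert_self p Ch
    have hcpnot : ({c, p} : Finset V) ∉ Q'.image (fun S => S.image Subtype.val) := by
      intro hh
      obtain ⟨S', -, hSeq⟩ := Finset.mem_image.mp hh
      exact hliftW S' c (by rw [hSeq]; exact Finset.mem_insert_self c {p}) hcW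
    refine ⟨insert {c, p} (Q'.image (fun S => S.image Subtype.val)), ?_, ?_, ?_⟩
    · intro S hS
      rcases Finset.mem_insert.mp hS with rfl | hS'
      · exact ⟨c, p, (hchd c hcCh).1.symm, rfl, hcw⟩
      · exact hliftpairs S hS'
    · have hdiscp : ∀ S₂ ∈ Q'.image (fun S => S.image Subtype.val),
          Disjoint ({c, p} : Finset V) S₂ := by
        intro S₂ h₂
        obtain ⟨S₂', hS₂', rfl⟩ := Finset.mem_image.mp h₂
        rw [Finset.disjoint_left]
        intro a ha haS₂
        have haW : a ∈ W := by
          rcases Finset.mem_insert.mp ha with rfl | ha'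
          · exact hcW
          · rw [Finset.mem_singleton] at ha'
            rw [ha']
            exact hpW
        exact hliftW S₂' a haS₂ haW
      intro S₁ h₁ S₂ h₂ hne
      rcases Finset.mem_insert.mp h₁ with rfl | h₁'
      · rcases Finset.mem_insert.mp h₂ with h2eq | h₂'
        · exact absurd h2eq.symm hne
        · exact hdiscp S₂ h₂'
      · rcases Finset.mem_insert.mp h₂ with h2eq | h₂'
        · rw [h2eq]
          exact (hdiscp S₁ h₁').symm
        · exact hliftdisj S₁ h₁' S₂ h₂' hne
    · have hQcard : (insert ({c, p} : Finset V)
          (Q'.image (fun S => S.image Subtype.val))).card = Q'.card + 1 := by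
        rw [Finset.card_insert_of_notMem hcpnot, hliftcard]
      replace hQ'bound : Fintype.card ↥U ≤ 6 * Q'.card + 5 + 3 * ((∑ v ∈ Wᶜ, (w v - T.degree v)) + 1) := by
        convert hQ'bound using 3
        convert hph'.symm
      omega
  · push_neg at hcase
    have hphW2 : 2 ≤ phW := by
      rw [hphW, hW, Finset.sum_insert hpCh]
      have h1le : 1 ≤ Ch.card := Finset.card_pos.mpr ⟨ℓ, hℓCh⟩
      have h12 : Ch.card = 1 ∨ Ch.card = 2 := by
        have := hdeg3 p
        omega
      rcases h12 with h1 | h2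
      · obtain ⟨c, hc⟩ := Finset.card_eq_one.mp h1
        have hcCh : c ∈ Ch := by rw [hc]; exact Finset.mem_singleton_self c
        rw [hc, Finset.sum_singleton]
        have h5 := hcase c hcCh
        have hdegc := hChdeg c hcCh
        have hdegp : T.degree p = 2 := by omega
        have h6 := hdw p
        have h7 := hw3 c
        omega
      · obtain ⟨c₁, c₂, hnec, hc⟩ := Finset.card_eq_two.mp h2
        have hc₁ : c₁ ∈ Ch := by rw [hc]; exact Finset.mem_insert_self c₁ {c₂}
        have hc₂ : c₂ ∈ Ch := by
          rw [hc]
          exact Finset.mem_insert_of_mem (Finset.mem_singleton_self c₂)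
        rw [hc, Finset.sum_insert (by simpa using hnec), Finset.sum_singleton]
        have h5₁ := hcase c₁ hc₁
        have h5₂ := hcase c₂ hc₂
        have hdegc₁ := hChdeg c₁ hc₁
        have hdegc₂ := hChdeg c₂ hc₂
        have hdegp : T.degree p = 3 := by omega
        have h6 := hdw p
        have h7 := hw3 p
        omega
    refine ⟨Q'.image (fun S => S.image Subtype.val), hliftpairs, hliftdisj, ?_⟩
    replace hQ'bound : Fintype.card ↥U ≤ 6 * Q'.card + 5 + 3 * ((∑ v ∈ Wᶜ, (w v - T.degree v)) + 1) := by
      convert hQ'bound using 3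
      convert hph'.symm
    have := hliftcard
    omega


theorem part2 (T : SimpleGraph V) (r : V) (hbt : IsBinaryRootedTree T r) :
    ∃ P : Finset (Finset V), IsRestrictedPartition T 2 P ∧
      P.card ≤ (5 * Fintype.card V + 5) / 6 := by
  obtain ⟨hT, hdeg2⟩ := hbt
  have hdeg3 : ∀ u, T.degree u ≤ 3 := degree_le_three hT r hdeg2
  set n := Fintype.card V with hn
  obtain ⟨Q₀, hQ₀pairs, hQ₀disj, hQ₀bound⟩ := pairing_exists n V _ _ rfl T (fun v => T.degree v) hT
    (fun v => le_refl _) hdeg3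
  have hzero : ∑ v : V, (T.degree v - T.degree v) = 0 := by simp
  rw [hzero] at hQ₀bound
  -- take a maximum-cardinality valid pairing
  set valid : Finset (Finset V) → Prop := fun Q =>
    (∀ S ∈ Q, ∃ u v : V, T.Adj u v ∧ S = {u, v} ∧ T.degree u + T.degree v ≤ 4) ∧
    (∀ S₁ ∈ Q, ∀ S₂ ∈ Q, S₁ ≠ S₂ → Disjoint S₁ S₂) with hvalid
  have hQ₀valid : valid Q₀ := ⟨hQ₀pairs, hQ₀disj⟩
  obtain ⟨Q, hQmem, hQmax⟩ := Finset.exists_max_image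
    ((Finset.univ : Finset (Finset (Finset V))).filter valid) Finset.card
    ⟨Q₀, Finset.mem_filter.mpr ⟨Finset.mem_univ _, hQ₀valid⟩⟩
  obtain ⟨hQpairs, hQdisj⟩ : valid Q := (Finset.mem_filter.mp hQmem).2
  have hQ₀le : Q₀.card ≤ Q.card :=
    hQmax Q₀ (Finset.mem_filter.mpr ⟨Finset.mem_univ _, hQ₀valid⟩)
  set Unp : Finset V := Finset.univ.filter (fun v => ∀ S ∈ Q, v ∉ S) with hUnp
  have hmemUnp : ∀ v : V, v ∈ Unp ↔ ∀ S ∈ Q, v ∉ S := by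
    intro v
    rw [hUnp, Finset.mem_filter]
    simp
  set P : Finset (Finset V) := Q ∪ Unp.image (fun v => ({v} : Finset V)) with hP
  -- maximality of the matching
  have hmaxmatch : ∀ u v : V, T.Adj u v → T.degree u + T.degree v ≤ 4 →
      u ∈ Unp → v ∈ Unp → False := by
    intro u v huv hdsum hu hv
    have huv' : ({u, v} : Finset V) ∉ Q := by
      intro hh
      exact (hmemUnp u).mp hu _ hh (Finset.mem_insert_self u {v})
    have hvalid' : valid (insert {u, v} Q) := by
      constructor
      · intro S hS
        rcases Finset.mem_insert.mp hS with rfl | hS'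
        · exact ⟨u, v, huv, rfl, hdsum⟩
        · exact hQpairs S hS'
      · have hdis : ∀ S ∈ Q, Disjoint ({u, v} : Finset V) S := by
          intro S hS
          rw [Finset.disjoint_left]
          intro a ha haS
          rcases Finset.mem_insert.mp ha with rfl | ha'
          · exact (hmemUnp a).mp hu S hS haS
          · rw [Finset.mem_singleton] at ha'
            subst ha'
            exact (hmemUnp a).mp hv S hS haS
        intro S₁ h₁ S₂ h₂ hne
        rcases Finset.mem_insert.mp h₁ with rfl | h₁'
        · rcases Finset.mem_insert.mp h₂ with h2eq | h₂'
          · exact absurd h2eq.symm hne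
          · exact hdis S₂ h₂'
        · rcases Finset.mem_insert.mp h₂ with h2eq | h₂'
          · rw [h2eq]
            exact (hdis S₁ h₁').symm
          · exact hQdisj S₁ h₁' S₂ h₂' hne
    have hle := hQmax (insert {u, v} Q)
      (Finset.mem_filter.mpr ⟨Finset.mem_univ _, hvalid'⟩)
    rw [Finset.card_insert_of_notMem huv'] at hle
    omega
  -- basic facts about parts
  have hQcard2 : ∀ S ∈ Q, S.card = 2 := by
    intro S hS
    obtain ⟨u, v, huv, rfl, -⟩ := hQpairs S hS
    exact Finset.card_pair huv.ne
  have hsing : ∀ S ∈ Unp.image (fun v => ({v} : Finset V)), ∃ x ∈ Unp, S = {x} := by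
    intro S hS
    obtain ⟨x, hx, rfl⟩ := Finset.mem_image.mp hS
    exact ⟨x, hx, rfl⟩
  -- cover
  have hcover : ∀ v : V, ∃! S : Finset V, S ∈ P ∧ v ∈ S := by
    intro v
    by_cases hv : ∀ S ∈ Q, v ∉ S
    · refine ⟨{v}, ⟨Finset.mem_union_right _ (Finset.mem_image.mpr
        ⟨v, (hmemUnp v).mpr hv, rfl⟩), Finset.mem_singleton_self v⟩, ?_⟩
      rintro S' ⟨hS'P, hvS'⟩
      rcases Finset.mem_union.mp hS'P with h1 | h1
      · exact absurd hvS' (hv S' h1)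
      · obtain ⟨x, hx, rfl⟩ := hsing S' h1
        rw [Finset.mem_singleton] at hvS'
        rw [hvS']
    · push_neg at hv
      obtain ⟨S, hSQ, hvS⟩ := hv
      refine ⟨S, ⟨Finset.mem_union_left _ hSQ, hvS⟩, ?_⟩
      rintro S' ⟨hS'P, hvS'⟩
      rcases Finset.mem_union.mp hS'P with h1 | h1
      · by_contra hne
        exact Finset.disjoint_left.mp (hQdisj S' h1 S hSQ hne) hvS' hvS
      · obtain ⟨x, hx, rfl⟩ := hsing S' h1
        rw [Finset.mem_singleton] at hvS'
        subst hvS'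
        exact absurd hvS ((hmemUnp v).mp hx S hSQ)
  have hdisjP : ∀ S₁ ∈ P, ∀ S₂ ∈ P, S₁ ≠ S₂ → Disjoint S₁ S₂ := by
    intro S₁ h₁ S₂ h₂ hne
    rw [Finset.disjoint_left]
    intro a ha₁ ha₂
    obtain ⟨S, -, huniq⟩ := hcover a
    exact hne ((huniq S₁ ⟨h₁, ha₁⟩).trans (huniq S₂ ⟨h₂, ha₂⟩).symm)
  -- the partition is restricted
  have hrp : IsRestrictedPartition T 2 P := by
    refine ⟨hcover, ?_, ?_, ?_⟩
    · intro S hS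
      rcases Finset.mem_union.mp hS with h1 | h1
      · obtain ⟨u, v, -, rfl, -⟩ := hQpairs S h1
        exact ⟨u, Finset.mem_insert_self u {v}⟩
      · obtain ⟨x, -, rfl⟩ := hsing S h1
        exact ⟨x, Finset.mem_singleton_self x⟩
    · intro S hS
      rcases Finset.mem_union.mp hS with h1 | h1
      · obtain ⟨u, v, huv, rfl, hdsum⟩ := hQpairs S h1
        refine ⟨by rw [Finset.card_pair huv.ne], connected_induce_pair huv, ?_⟩
        intro _hc
        show (bdry T {u, v}).card ≤ 2
        have := bdry_pair_card T huv
        omega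
      · obtain ⟨x, -, rfl⟩ := hsing S h1
        refine ⟨by simp, connected_induce_singleton T x, ?_⟩
        intro hh
        simp at hh
    · intro S₁ h₁ S₂ h₂ hne hgood
      obtain ⟨hcard, hconn, hbd⟩ := hgood
      have hdis := hdisjP S₁ h₁ S₂ h₂ hne
      have hc₁ : 1 ≤ S₁.card := Finset.card_pos.mpr (by
        rcases Finset.mem_union.mp h₁ with hh | hh
        · obtain ⟨u, v, -, rfl, -⟩ := hQpairs S₁ hh
          exact ⟨u, Finset.mem_insert_self u {v}⟩
        · obtain ⟨x, -, rfl⟩ := hsing S₁ hh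
          exact ⟨x, Finset.mem_singleton_self x⟩)
      have hc₂ : 1 ≤ S₂.card := Finset.card_pos.mpr (by
        rcases Finset.mem_union.mp h₂ with hh | hh
        · obtain ⟨u, v, -, rfl, -⟩ := hQpairs S₂ hh
          exact ⟨u, Finset.mem_insert_self u {v}⟩
        · obtain ⟨x, -, rfl⟩ := hsing S₂ hh
          exact ⟨x, Finset.mem_singleton_self x⟩)
      have hu : S₁.card = 1 ∧ S₂.card = 1 := by
        have := Finset.card_union_of_disjoint hdis
        omega
      obtain ⟨x, rfl⟩ := Finset.card_eq_one.mp hu.1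
      obtain ⟨y, rfl⟩ := Finset.card_eq_one.mp hu.2
      have hxy : x ≠ y := by
        intro hh
        exact hne (by rw [hh])
      have hxU : x ∈ Unp := by
        rcases Finset.mem_union.mp h₁ with hh | hh
        · have := hQcard2 _ hh
          simp at this
        · obtain ⟨a, haU, heq⟩ := hsing _ hh
          have : a = x := by
            have := Finset.mem_singleton_self a
            rw [← heq] at this
            exact Finset.mem_singleton.mp this
          rwa [← this]
      have hyU : y ∈ Unp := by
        rcases Finset.mem_union.mp h₂ with hh | hh
        · have := hQcard2 _ hh
          simp at this
        · obtain ⟨a, haU, heq⟩ := hsing _ hh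
          have : a = y := by
            have := Finset.mem_singleton_self a
            rw [← heq] at this
            exact Finset.mem_singleton.mp this
          rwa [← this]
      have hun : ({x} : Finset V) ∪ {y} = {x, y} := rfl
      rw [hun] at hconn hbd
      have hadj : T.Adj x y := adj_of_connected_pair hxy hconn
      have hbd2 : (bdry T {x, y}).card ≤ 2 := hbd (by rw [Finset.card_pair hxy]; omega)
      have := bdry_pair_card T hadj
      exact hmaxmatch x y hadj (by omega) hxU hyU
  -- counting
  have hQsum : ∑ S ∈ Q, S.card = 2 * Q.card := by
    rw [Finset.sum_congr rfl hQcard2, Finset.sum_const, smul_eq_mul]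
    ring
  have hpart : 2 * Q.card + Unp.card = n := by
    have hdisQU : Disjoint (Q.biUnion (fun S => S)) Unp := by
      rw [Finset.disjoint_left]
      intro a ha haU
      obtain ⟨S, hSQ, haS⟩ := Finset.mem_biUnion.mp ha
      exact (hmemUnp a).mp haU S hSQ haS
    have hcup : Q.biUnion (fun S => S) ∪ Unp = Finset.univ := by
      apply Finset.eq_univ_of_forall
      intro v
      rw [Finset.mem_union]
      by_cases hv : ∀ S ∈ Q, v ∉ S
      · exact Or.inr ((hmemUnp v).mpr hv)
      · push_neg at hv
        obtain ⟨S, h1, h2⟩ := hv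
        exact Or.inl (Finset.mem_biUnion.mpr ⟨S, h1, h2⟩)
    have hbi : (Q.biUnion (fun S => S)).card = ∑ S ∈ Q, S.card :=
      Finset.card_biUnion (fun S₁ h₁ S₂ h₂ hne => hQdisj S₁ h₁ S₂ h₂ hne)
    have := Finset.card_union_of_disjoint hdisQU
    rw [hcup, Finset.card_univ, hbi, hQsum] at this
    omega
  have hPcard : P.card ≤ Q.card + Unp.card := by
    calc P.card ≤ Q.card + (Unp.image (fun v => ({v} : Finset V))).card :=
          Finset.card_union_le _ _
      _ ≤ Q.card + Unp.card := by
          have := Finset.card_image_le (s := Unp) (f := fun v => ({v} : Finset V))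
          omega
  refine ⟨P, hrp, ?_⟩
  rw [Nat.le_div_iff_mul_le (by norm_num : 0 < 6)]
  omega


end RPB

/-- Any restricted partition of order `z` of a rooted binary tree on `n` vertices
has `O(n/z)` sets; and for `z = 2` there exists a restricted partition with at
most `⌈5n/6⌉` sets. -/
theorem restricted_partition_bounds :
    ∃ C : ℕ,
      (∀ (V : Type) (_ : Fintype V) (_ : DecidableEq V) (T : SimpleGraph V) (r : V)
          (z : ℕ) (P : Finset (Finset V)), 2 ≤ z → z ≤ Fintype.card V →
          IsBinaryRootedTree T r → IsRestrictedPartition T z P →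
          P.card * z ≤ C * Fintype.card V) ∧
      (∀ (V : Type) (_ : Fintype V) (_ : DecidableEq V) (T : SimpleGraph V) (r : V),
          IsBinaryRootedTree T r →
          ∃ P : Finset (Finset V), IsRestrictedPartition T 2 P ∧
            P.card ≤ (5 * Fintype.card V + 5) / 6) := by
  refine ⟨32, ?_, ?_⟩
  · intro V _ _ T r z P hz2 hzn hbt hP
    exact RPB.part1 T r z P hz2 hzn hbt hP
  · intro V _ _ T r hbt
    exact RPB.part2 T r hbt
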